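/- Let π̄ = (π̄_1,...,π̄_p) be a feasible solution of the dual fractional bin packing LP with π̄_1 ≥ ... ≥ π̄_p, for sizes s_1 > ... > s_p. Define g : [0,1] → [0,1] by g(0)=0 and g(x)=π̄_j for x ∈ [s_j, s_{j-1}) (with s_0 = 1, s_{p+1}=0, π̄_{p+1}=0). Then g is a dual feasible function. -/

import Mathlib

/-- Let `π̄` be a feasible solution of the dual fractional bin packing LP with
`π̄ 1 ≥ … ≥ π̄ p`, for sizes `1 = s 0 > s 1 > … > s p > s (p+1) = 0`.  Define
`g : [0,1] → [0,1]` by `g 0 = 0` and `g x = π̄ j` for `x ∈ [s j, s (j-1))`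
(and `g 1 = π̄ 1`, with `π̄ (p+1) = 0`).  Then `g` is a dual feasible function. -/
theorem step_function_dualFeasible (p : ℕ) (s : ℕ → ℝ) (pib : ℕ → ℝ) (g : ℝ → ℝ)
    (hs0 : s 0 = 1) (hsp : s (p + 1) = 0)
    (hdec : ∀ j ≤ p, s (j + 1) < s j)
    (hpos : ∀ j, 0 ≤ pib j) (hlast : pib (p + 1) = 0)
    (hmono : ∀ i j, 1 ≤ i → i ≤ j → j ≤ p + 1 → pib j ≤ pib i)
    (hfeas : ∀ v : ℕ → ℕ, (∑ j ∈ Finset.Icc 1 p, (v j : ℝ) * s j) ≤ 1 →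
      (∑ j ∈ Finset.Icc 1 p, (v j : ℝ) * pib j) ≤ 1)
    (hg0 : g 0 = 0) (hg1 : g 1 = pib 1)
    (hgstep : ∀ j, 1 ≤ j → j ≤ p + 1 → ∀ x : ℝ, s j ≤ x → x < s (j - 1) → g x = pib j) :
    (∀ x ∈ Set.Icc (0 : ℝ) 1, g x ∈ Set.Icc (0 : ℝ) 1) ∧
    ∀ (n : ℕ) (x : Fin n → ℝ), (∀ i, x i ∈ Set.Icc (0 : ℝ) 1) → (∑ i, x i) ≤ 1 →
      (∑ i, g (x i)) ≤ 1 := by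
  classical
  -- existence of index
  have hidx : ∀ x : ℝ, x ∈ Set.Icc (0:ℝ) 1 →
      ∃ j, 1 ≤ j ∧ j ≤ p + 1 ∧ s j ≤ x ∧ g x = pib j := by
    intro x hx
    obtain ⟨hx0, hx1⟩ := hx
    rcases eq_or_lt_of_le hx1 with h1 | h1
    · refine ⟨1, le_refl _, by omega, ?_, by rw [h1, hg1]⟩
      have := hdec 0 (Nat.zero_le p)
      rw [hs0] at this
      linarith [this]
    · have hex : ∃ j, s j ≤ x := ⟨p + 1, by rw [hsp]; exact hx0⟩
      set j := Nat.find hex with hj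
      have hsj : s j ≤ x := Nat.find_spec hex
      have hjle : j ≤ p + 1 := Nat.find_le (by rw [hsp]; exact hx0)
      have hj1 : 1 ≤ j := by
        by_contra h
        have : j = 0 := by omega
        rw [this, hs0] at hsj
        linarith
      have hxlt : x < s (j - 1) := by
        have := Nat.find_min hex (m := j - 1) (by omega)
        linarith [not_le.mp this]
      exact ⟨j, hj1, hjle, hsj, hgstep j hj1 hjle x hsj hxlt⟩
  -- pib j ≤ 1 for 1 ≤ j ≤ p+1 when s j ≤ 1
  have hpib1 : ∀ j, 1 ≤ j → j ≤ p + 1 → s j ≤ 1 → pib j ≤ 1 := by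
    intro j hj1 hjp hsj
    rcases eq_or_lt_of_le hjp with h | h
    · rw [h, hlast]; norm_num
    · have hjp' : j ≤ p := by omega
      have := hfeas (fun k => if k = j then 1 else 0) ?_
      · push_cast at this
        calc pib j = ∑ k ∈ Finset.Icc 1 p,
              (if k = j then (1:ℝ) else 0) * pib k := by
              rw [Finset.sum_eq_single j]
              · simp
              · intro b _ hb; simp [hb]
              · intro hb; simp [Finset.mem_Icc] at hb; omega
          _ ≤ 1 := this
      · push_cast
        rw [Finset.sum_eq_single j]
        · simpa using hsj
        · intro b _ hb; simp [hb]
        · intro hb; simp [Finset.mem_Icc] at hb; omega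
  constructor
  · intro x hx
    obtain ⟨j, hj1, hjp, hsj, hgx⟩ := hidx x hx
    refine ⟨hgx ▸ hpos j, hgx ▸ hpib1 j hj1 hjp (le_trans hsj hx.2)⟩
  · intro n x hx hsum
    choose J hJ1 hJp hJs hJg using fun i => hidx (x i) (hx i)
    set v : ℕ → ℕ := fun j => (Finset.univ.filter (fun i => J i = j)).card with hv
    have hmaps : ∀ i ∈ (Finset.univ : Finset (Fin n)), J i ∈ Finset.Icc 1 (p+1) := by
      intro i _; simp [Finset.mem_Icc]; exact ⟨hJ1 i, hJp i⟩
    -- s-sum bound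
    have hssum : (∑ j ∈ Finset.Icc 1 p, (v j : ℝ) * s j) ≤ 1 := by
      have key : (∑ j ∈ Finset.Icc 1 (p+1), (v j : ℝ) * s j) ≤ ∑ i, x i := by
        have := Finset.sum_fiberwise_of_maps_to hmaps (fun i => x i)
        rw [← this]
        apply Finset.sum_le_sum
        intro j _
        calc (v j : ℝ) * s j
            = ∑ i ∈ Finset.univ.filter (fun i => J i = j), s j := by
              simp [hv, mul_comm]
          _ ≤ ∑ i ∈ Finset.univ.filter (fun i => J i = j), x i := by
              apply Finset.sum_le_sum
              intro i hi
              simp only [Finset.mem_filter] at hi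
              rw [← hi.2]; exact hJs i
      have hsplit : (∑ j ∈ Finset.Icc 1 (p+1), (v j : ℝ) * s j)
          = (∑ j ∈ Finset.Icc 1 p, (v j : ℝ) * s j) + (v (p+1) : ℝ) * s (p+1) :=
        Finset.sum_Icc_succ_top (by omega) _
      rw [hsplit, hsp, mul_zero, add_zero] at key
      linarith
    have hmain := hfeas v hssum
    -- g-sum
    have hgsum : (∑ i, g (x i)) = ∑ j ∈ Finset.Icc 1 (p+1), (v j : ℝ) * pib j := by
      rw [← Finset.sum_fiberwise_of_maps_to hmaps (fun i => g (x i))]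
      apply Finset.sum_congr rfl
      intro j _
      calc (∑ i ∈ Finset.univ.filter (fun i => J i = j), g (x i))
          = ∑ i ∈ Finset.univ.filter (fun i => J i = j), pib j := by
            apply Finset.sum_congr rfl
            intro i hi
            simp only [Finset.mem_filter] at hi
            rw [hJg i, hi.2]
        _ = (v j : ℝ) * pib j := by simp [hv, mul_comm]
    rw [hgsum, Finset.sum_Icc_succ_top (by omega : 1 ≤ p + 1), hlast, mul_zero, add_zero]
    exact hmain
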